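/- Let p be a prime, and in F_p set x = (1,0,0,0,0,0) and y = (0,1,0,0,0,0). Then x^p = (0,0,1,0,0,0), y^p = (0,0,0,1,0,0), (x,x,y) = (0,0,0,0,1,0), (x,y,y) = (0,0,0,0,0,1), and every element (a1,a2,a3,a4,a5,a6) of F_p equals (((((x^{n1}·y^{n2})·(x^p)^{n3})·(y^p)^{n4})·(x,x,y)^{n5})·(x,y,y)^{n6}), where ni ∈ {0,…,p−1} is the canonical representative of ai. -/

import Mathlib

/-- The modular overflow indicator `(a,b)_p`. -/
def ovf (p : ℕ) (a b : ZMod p) : ZMod p := if p ≤ a.val + b.val then 1 else 0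

/-- The carrier `(ℤ_p)⁶` of the loop `F_p`. -/
abbrev FpCarrier (p : ℕ) := ZMod p × ZMod p × ZMod p × ZMod p × ZMod p × ZMod p

/-- The multiplication of the loop `F_p`. -/
def fpMul (p : ℕ) : FpCarrier p → FpCarrier p → FpCarrier p
  | (a1, a2, a3, a4, a5, a6), (b1, b2, b3, b4, b5, b6) =>
    (a1 + b1, a2 + b2, a3 + b3 + ovf p a1 b1, a4 + b4 + ovf p a2 b2,
     a5 + b5 - a1 * b1 * (a2 + b2), a6 + b6 + a2 * b2 * (a1 + b1))

/-- Powers in `F_p`: `a^0 = 1`, `a^(n+1) = a·(a^n)`. -/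
def fpPow (p : ℕ) (a : FpCarrier p) : ℕ → FpCarrier p
  | 0 => (0, 0, 0, 0, 0, 0)
  | n + 1 => fpMul p a (fpPow p a n)

lemma ovf_zero_right (p : ℕ) [NeZero p] (a : ZMod p) : ovf p a 0 = 0 := by
  simp [ovf, Nat.not_le.2 (ZMod.val_lt a)]

lemma ovf_zero_left (p : ℕ) [NeZero p] (a : ZMod p) : ovf p 0 a = 0 := by
  simp [ovf, Nat.not_le.2 (ZMod.val_lt a)]

lemma ovf_one_cast (p : ℕ) [Fact (1 < p)] (n : ℕ) (h : n + 1 < p) :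
    ovf p 1 (n : ZMod p) = 0 := by
  rw [ovf, ZMod.val_one, ZMod.val_cast_of_lt (by omega)]
  simp [Nat.not_le.2 (by omega : 1 + n < p)]

lemma pow_x (p : ℕ) [Fact (1 < p)] : ∀ n, n < p →
    fpPow p (1,0,0,0,0,0) n = ((n : ZMod p),0,0,0,0,0) := by
  intro n
  induction n with
  | zero => intro _; simp [fpPow]
  | succ n ih =>
    intro h
    rw [fpPow, ih (by omega)]
    simp [fpMul, ovf_one_cast p n h, ovf_zero_right, ovf_zero_left]
    push_cast
    ring

lemma pow_y (p : ℕ) [Fact (1 < p)] : ∀ n, n < p →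
    fpPow p (0,1,0,0,0,0) n = (0,(n : ZMod p),0,0,0,0) := by
  intro n
  induction n with
  | zero => intro _; simp [fpPow]
  | succ n ih =>
    intro h
    rw [fpPow, ih (by omega)]
    simp [fpMul, ovf_one_cast p n h, ovf_zero_right, ovf_zero_left]
    push_cast
    ring

lemma pow_x_p (p : ℕ) [Fact (1 < p)] : fpPow p (1,0,0,0,0,0) p = (0,0,1,0,0,0) := by
  have h1 : 1 < p := Fact.out
  obtain ⟨q, rfl⟩ : ∃ q, p = q + 1 := ⟨p - 1, by omega⟩
  rw [fpPow, pow_x _ q (by omega)]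
  have hv : ((q : ZMod (q+1))).val = q := ZMod.val_cast_of_lt (by omega)
  simp [fpMul, ovf, hv, ZMod.val_one, ovf_zero_right, ovf_zero_left]
  have h2 : (1 : ZMod (q+1)) + (q : ℕ) = ((q+1 : ℕ) : ZMod (q+1)) := by push_cast; ring
  rw [h2, ZMod.natCast_self]

lemma pow_y_p (p : ℕ) [Fact (1 < p)] : fpPow p (0,1,0,0,0,0) p = (0,0,0,1,0,0) := by
  have h1 : 1 < p := Fact.out
  obtain ⟨q, rfl⟩ : ∃ q, p = q + 1 := ⟨p - 1, by omega⟩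
  rw [fpPow, pow_y _ q (by omega)]
  have hv : ((q : ZMod (q+1))).val = q := ZMod.val_cast_of_lt (by omega)
  simp [fpMul, ovf, hv, ZMod.val_one, ovf_zero_right, ovf_zero_left]
  have h2 : (1 : ZMod (q+1)) + (q : ℕ) = ((q+1 : ℕ) : ZMod (q+1)) := by push_cast; ring
  rw [h2, ZMod.natCast_self]

lemma pow_z3 (p : ℕ) [NeZero p] (n : ℕ) :
    fpPow p (0,0,1,0,0,0) n = (0,0,(n : ZMod p),0,0,0) := by
  induction n with
  | zero => simp [fpPow]
  | succ n ih => rw [fpPow, ih]; simp [fpMul, ovf_zero_left]; push_cast; ring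

lemma pow_z4 (p : ℕ) [NeZero p] (n : ℕ) :
    fpPow p (0,0,0,1,0,0) n = (0,0,0,(n : ZMod p),0,0) := by
  induction n with
  | zero => simp [fpPow]
  | succ n ih => rw [fpPow, ih]; simp [fpMul, ovf_zero_left]; push_cast; ring

lemma pow_z5 (p : ℕ) [NeZero p] (n : ℕ) :
    fpPow p (0,0,0,0,1,0) n = (0,0,0,0,(n : ZMod p),0) := by
  induction n with
  | zero => simp [fpPow]
  | succ n ih => rw [fpPow, ih]; simp [fpMul, ovf_zero_left]; push_cast; ring

lemma pow_z6 (p : ℕ) [NeZero p] (n : ℕ) :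
    fpPow p (0,0,0,0,0,1) n = (0,0,0,0,0,(n : ZMod p)) := by
  induction n with
  | zero => simp [fpPow]
  | succ n ih => rw [fpPow, ih]; simp [fpMul, ovf_zero_left]; push_cast; ring

/-- With `x = (1,0,0,0,0,0)`, `y = (0,1,0,0,0,0)` in `F_p`: the values of `x^p`, `y^p`
and of the associators `(x,x,y)`, `(x,y,y)` (characterized as the unique solutions `t` of
`(x·(x·y))·t = (x·x)·y`, resp. `(x·(y·y))·t = (x·y)·y`), and the canonical form
`(a1,…,a6) = ((((x^{n1}·y^{n2})·(x^p)^{n3})·(y^p)^{n4})·(x,x,y)^{n5})·(x,y,y)^{n6}`,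
where `ni` is the canonical representative of `ai`. -/
theorem stmt_10 (p : ℕ) (hp : p.Prime) :
    let x : FpCarrier p := (1, 0, 0, 0, 0, 0)
    let y : FpCarrier p := (0, 1, 0, 0, 0, 0)
    fpPow p x p = (0, 0, 1, 0, 0, 0) ∧
    fpPow p y p = (0, 0, 0, 1, 0, 0) ∧
    (∀ t, fpMul p (fpMul p x (fpMul p x y)) t = fpMul p (fpMul p x x) y →
      t = (0, 0, 0, 0, 1, 0)) ∧
    (∀ t, fpMul p (fpMul p x (fpMul p y y)) t = fpMul p (fpMul p x y) y →
      t = (0, 0, 0, 0, 0, 1)) ∧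
    (∀ a1 a2 a3 a4 a5 a6 : ZMod p,
      (a1, a2, a3, a4, a5, a6) =
        fpMul p
          (fpMul p
            (fpMul p
              (fpMul p
                (fpMul p (fpPow p x a1.val) (fpPow p y a2.val))
                (fpPow p (fpPow p x p) a3.val))
              (fpPow p (fpPow p y p) a4.val))
            (fpPow p ((0, 0, 0, 0, 1, 0) : FpCarrier p) a5.val))
          (fpPow p ((0, 0, 0, 0, 0, 1) : FpCarrier p) a6.val)) := by
  haveI : Fact (1 < p) := ⟨hp.one_lt⟩
  haveI : NeZero p := ⟨hp.pos.ne'⟩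
  intro x y
  refine ⟨pow_x_p p, pow_y_p p, ?_, ?_, ?_⟩
  · rintro ⟨t1, t2, t3, t4, t5, t6⟩ h
    simp only [x, y, fpMul, Prod.mk.injEq, ovf_zero_right, ovf_zero_left] at h
    obtain ⟨h1, h2, h3, h4, h5, h6⟩ := h
    have e1 : t1 = 0 := by linear_combination h1
    have e2 : t2 = 0 := by linear_combination h2
    subst e1; subst e2
    simp only [add_zero, zero_add, ovf_zero_right, ovf_zero_left] at h3 h4 h5 h6
    simp only [Prod.mk.injEq]
    exact ⟨by trivial, by trivial, by linear_combination h3, by linear_combination h4,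
      by linear_combination h5, by linear_combination h6⟩
  · rintro ⟨t1, t2, t3, t4, t5, t6⟩ h
    simp only [x, y, fpMul, Prod.mk.injEq, ovf_zero_right, ovf_zero_left] at h
    obtain ⟨h1, h2, h3, h4, h5, h6⟩ := h
    have e1 : t1 = 0 := by linear_combination h1
    have e2 : t2 = 0 := by linear_combination h2
    subst e1; subst e2
    simp only [add_zero, zero_add, ovf_zero_right, ovf_zero_left] at h3 h4 h5 h6
    simp only [Prod.mk.injEq]
    exact ⟨by trivial, by trivial, by linear_combination h3, by linear_combination h4,
      by linear_combination h5, by linear_combination h6⟩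
  · intro a1 a2 a3 a4 a5 a6
    rw [show x = ((1:ZMod p),0,0,0,0,0) from rfl, show y = ((0:ZMod p),1,0,0,0,0) from rfl,
      pow_x p a1.val (ZMod.val_lt a1), pow_y p a2.val (ZMod.val_lt a2),
      pow_x_p, pow_y_p, pow_z3, pow_z4, pow_z5, pow_z6]
    simp [fpMul, ovf_zero_right, ovf_zero_left, ZMod.natCast_val, ZMod.cast_id]
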